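/- For all positive integers k, n, t: in any k-colouring of the vertices of the grid [t·k·C(nk,n)] × [kn], there is a monochromatic subgrid of size t × n, i.e. sets A ⊆ [t·k·C(nk,n)] with |A| = t and B ⊆ [kn] with |B| = n such that all points of A × B receive the same colour. -/
import Mathlib


/-- In any `k`-colouring of a `t·k·C(nk,n) × kn` grid there is a
monochromatic `t × n` subgrid. -/
theorem stmt_1 (k n t : ℕ) (hk : 0 < k) (hn : 0 < n) (ht : 0 < t)
    (χ : Fin (t * k * Nat.choose (n * k) n) × Fin (k * n) → Fin k) :
    ∃ (A : Finset (Fin (t * k * Nat.choose (n * k) n)))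
      (B : Finset (Fin (k * n))) (c : Fin k),
      A.card = t ∧ B.card = n ∧ ∀ a ∈ A, ∀ b ∈ B, χ (a, b) = c := by
  classical
  have hR : t * k * Nat.choose (n * k) n = t * k * Nat.choose (n * k) n := rfl
  -- In each row, some colour appears at least n times.
  have hrow : ∀ a : Fin (t * k * Nat.choose (n * k) n), ∃ (c : Fin k) (B : Finset (Fin (k * n))),
      B.card = n ∧ ∀ b ∈ B, χ (a, b) = c := by
    intro a
    obtain ⟨c, -, hc⟩ := Finset.exists_le_card_fiber_of_mul_le_card_of_maps_to
      (s := (Finset.univ : Finset (Fin (k * n))))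
      (t := (Finset.univ : Finset (Fin k))) (n := n)
      (f := fun b => χ (a, b)) (fun b _ => Finset.mem_univ _)
      (Finset.univ_nonempty_iff.2 (Fin.pos_iff_nonempty.1 hk)) (by simp)
    obtain ⟨B, hBsub, hBcard⟩ := Finset.exists_subset_card_eq hc
    exact ⟨c, B, hBcard, fun b hb => (Finset.mem_filter.1 (hBsub hb)).2⟩
  choose c B hBcard hBmono using hrow
  -- Pigeonhole on rows over pairs (colour, column set).
  set T : Finset (Fin k × Finset (Fin (k * n))) :=
    Finset.univ ×ˢ Finset.powersetCard n Finset.univ with hT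
  have hTcard : T.card = k * Nat.choose (k * n) n := by
    simp [hT, Finset.card_powersetCard]
  have hmaps : ∀ a ∈ (Finset.univ : Finset (Fin (t * k * Nat.choose (n * k) n))), (c a, B a) ∈ T := by
    intro a _
    simp [hT, Finset.mem_powersetCard, hBcard, Finset.subset_univ]
  have hle : T.card * t ≤ (Finset.univ : Finset (Fin (t * k * Nat.choose (n * k) n))).card := by
    rw [Finset.card_univ, Fintype.card_fin, hTcard, Nat.mul_comm n k]
    exact le_of_eq (by ring)
  have hTne : T.Nonempty := Finset.card_pos.1 <| by
    rw [hTcard]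
    exact Nat.mul_pos hk (Nat.choose_pos (Nat.le_mul_of_pos_left n hk))
  obtain ⟨p, -, hp⟩ := Finset.exists_le_card_fiber_of_mul_le_card_of_maps_to (n := t) hmaps hTne hle
  obtain ⟨A, hAsub, hAcard⟩ := Finset.exists_subset_card_eq hp
  have hAprop : ∀ a ∈ A, c a = p.1 ∧ B a = p.2 := by
    intro a ha
    have := (Finset.mem_filter.1 (hAsub ha)).2
    exact ⟨congrArg Prod.fst this, congrArg Prod.snd this⟩
  obtain ⟨a0, ha0⟩ := Finset.card_pos.1 (hAcard ▸ ht)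
  refine ⟨A, p.2, p.1, hAcard, ?_, ?_⟩
  · rw [← (hAprop a0 ha0).2, hBcard]
  · intro a ha b hb
    obtain ⟨hc, hB⟩ := hAprop a ha
    rw [← hc]
    exact hBmono a b (hB ▸ hb)
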